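/- Let A be a finite set, let a₁, a₂, a₃, a₄ ∈ A (not necessarily distinct), and let M be the monoid defined by the presentation ⟨A | a₁a₂ = a₃a₄⟩ (the quotient of the free monoid A* by the monoid congruence generated by the pair (a₁a₂, a₃a₄)). Then for every monoid endomorphism φ of M: (i) the submonoid Per(φ) = { x ∈ M : φⁿ(x) = x for some n ≥ 1 } is finitely generated; and (ii) there exists a constant R_φ ≥ 1 such that φ^{R_φ}(x) = x for every x ∈ Per(φ), i.e., every periodic point of φ has period at most R_φ. -/

import Mathlib

open Function

section Aux

variable {M : Type*} [Monoid M]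

private lemma iter_prod (φ : M →* M) (n : ℕ) (l : List M) :
    (⇑φ)^[n] l.prod = (l.map ((⇑φ)^[n])).prod := by
  induction l with
  | nil => simp
  | cons a l ih => simp [ih]

private lemma ev_per_aux {X : Type*} (f : X → X) (x : X) {a b : ℕ} (h : a < b)
    (he : f^[a] x = f^[b] x) :
    ∀ m ≥ a, ∃ p, 1 ≤ p ∧ f^[p] (f^[m] x) = f^[m] x := by
  intro m hm
  refine ⟨b - a, by omega, ?_⟩
  have hb : b = (b - a) + a := by omega
  have hm' : m = (m - a) + a := by omega
  calc f^[b-a] (f^[m] x) = f^[(b-a) + m] x := (Function.iterate_add_apply f _ _ x).symm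
    _ = f^[(b-a) + ((m-a)+a)] x := by rw [← hm']
    _ = f^[(m-a)] (f^[(b-a)+a] x) := by
        rw [show (b-a) + ((m-a)+a) = (m-a) + ((b-a)+a) by omega, Function.iterate_add_apply]
    _ = f^[(m-a)] (f^[a] x) := by rw [← hb, ← he]
    _ = f^[m] x := by rw [← Function.iterate_add_apply, ← hm']

private lemma ev_per {X : Type*} (f : X → X) (x : X) {S : Set X} (hS : S.Finite)
    (horb : ∀ n, f^[n] x ∈ S) :
    ∃ N, ∀ m ≥ N, ∃ p, 1 ≤ p ∧ f^[p] (f^[m] x) = f^[m] x := by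
  have : Finite S := hS
  obtain ⟨a, b, hab, he⟩ := Finite.exists_ne_map_eq_of_infinite
    (fun n : ℕ => (⟨f^[n] x, horb n⟩ : S))
  have he' : f^[a] x = f^[b] x := congrArg Subtype.val he
  rcases hab.lt_or_gt with h | h
  · exact ⟨a, ev_per_aux f x h he'⟩
  · exact ⟨b, ev_per_aux f x h he'.symm⟩

private lemma list_uniform {X : Type*} (f : X → X) (Q : X → Prop) :
    ∀ l : List X, (∀ g ∈ l, ∃ N, ∀ m ≥ N, Q (f^[m] g)) →
      ∃ N, ∀ m ≥ N, ∀ g ∈ l, Q (f^[m] g) := by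
  intro l
  induction l with
  | nil => exact fun _ => ⟨0, by simp⟩
  | cons a l ih =>
    intro h
    obtain ⟨N₁, h₁⟩ := h a List.mem_cons_self
    obtain ⟨N₂, h₂⟩ := ih (fun g hg => h g (List.mem_cons_of_mem _ hg))
    refine ⟨max N₁ N₂, fun m hm g hg => ?_⟩
    rcases List.mem_cons.1 hg with rfl | hg
    · exact h₁ m (le_trans (le_max_left _ _) hm)
    · exact h₂ m (le_trans (le_max_right _ _) hm) g hg

private lemma common_R {X : Type*} (f : X → X) {F : Set X} (hF : F.Finite) :
    (∀ z ∈ F, ∃ p, 1 ≤ p ∧ f^[p] z = z) → ∃ R, 1 ≤ R ∧ ∀ z ∈ F, f^[R] z = z := by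
  refine Set.Finite.induction_on F hF (fun _ => ⟨1, le_refl 1, fun z hz => absurd hz (Set.notMem_empty z)⟩) ?_
  intro a s _ _ ih h
  obtain ⟨p, hp1, hpz⟩ := h a (Set.mem_insert a s)
  obtain ⟨R, hR1, hR⟩ := ih (fun z hz => h z (Set.mem_insert_of_mem a hz))
  refine ⟨p * R, Nat.one_le_iff_ne_zero.2 (Nat.mul_ne_zero (by omega) (by omega)), fun z hz => ?_⟩
  rcases Set.mem_insert_iff.1 hz with rfl | hz
  · rw [Function.iterate_mul]; exact Function.iterate_fixed hpz R
  · rw [Nat.mul_comm, Function.iterate_mul]; exact Function.iterate_fixed (hR z hz) p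

private lemma main_lemma (φ : M →* M)
    (len : M → ℕ) (hlen : ∀ x y, len (x * y) = len x + len y)
    (hfin : ∀ C : ℕ, {x : M | len x ≤ C}.Finite)
    (G : Set M) (hGfin : G.Finite)
    (hG : ∀ x : M, ∃ l : List M, (∀ g ∈ l, g ∈ G) ∧ l.prod = x) :
    (∃ B : Finset M,
      (Submonoid.closure (B : Set M) : Set M) = {x : M | ∃ n : ℕ, 1 ≤ n ∧ (⇑φ)^[n] x = x}) ∧
    (∃ R : ℕ, 1 ≤ R ∧ ∀ x : M, (∃ n : ℕ, 1 ≤ n ∧ (⇑φ)^[n] x = x) → (⇑φ)^[R] x = x) := by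
  classical
  set P : Set M := {x | ∃ n, 1 ≤ n ∧ (⇑φ)^[n] x = x} with hPdef
  have len_one : len 1 = 0 := by have := hlen 1 1; simp at this; omega
  have len_prod : ∀ l : List M, len l.prod = (l.map len).sum := by
    intro l; induction l with
    | nil => simpa using len_one
    | cons a l ih => simp [hlen, ih]
  set Bdd : Set M := {x | ∃ c, ∀ n, len ((⇑φ)^[n] x) ≤ c} with hBdd
  set T : Set M := ⋃ g ∈ G ∩ Bdd, Set.range (fun n => (⇑φ)^[n] g) with hT
  have hTfin : T.Finite := by
    refine Set.Finite.biUnion (hGfin.subset Set.inter_subset_left) ?_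
    rintro g ⟨-, c, hc⟩
    exact (hfin c).subset (by rintro - ⟨n, rfl⟩; exact hc n)
  obtain ⟨C, hC⟩ : ∃ C, ∀ y ∈ T, len y ≤ C := by
    obtain ⟨C, hC⟩ := (hTfin.image len).bddAbove
    exact ⟨C, fun y hy => hC (Set.mem_image_of_mem len hy)⟩
  set F : Set M := P ∩ {x | len x ≤ C} with hF
  have hFfin : F.Finite := (hfin C).subset Set.inter_subset_right
  have key : ∀ x ∈ P, x ∈ Submonoid.closure F := by
    rintro x ⟨n, hn, hnx⟩
    obtain ⟨l, hlG, hlp⟩ := hG x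
    set c₀ := (Finset.range n).sup (fun r => len ((⇑φ)^[r] x)) with hc₀
    have hxorb : ∀ m, (⇑φ)^[m] x = (⇑φ)^[m % n] x := by
      intro m
      conv_lhs => rw [← Nat.mod_add_div m n]
      rw [Function.iterate_add_apply, Function.iterate_mul, Function.iterate_fixed hnx]
    have hxb : ∀ m, len ((⇑φ)^[m] x) ≤ c₀ := by
      intro m; rw [hxorb m]
      have h0 : 0 < n := hn
      have hmem : m % n ∈ Finset.range n := Finset.mem_range.2 (Nat.mod_lt m h0)
      exact Finset.le_sup (f := fun r => len ((⇑φ)^[r] x)) hmem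
    have hgb : ∀ g ∈ l, ∀ m, len ((⇑φ)^[m] g) ≤ c₀ := by
      intro g hg m
      have h1 : len ((⇑φ)^[m] x) = (l.map (fun y => len ((⇑φ)^[m] y))).sum := by
        rw [← hlp, iter_prod, len_prod, List.map_map]; rfl
      have h2 : len ((⇑φ)^[m] g) ∈ l.map (fun y => len ((⇑φ)^[m] y)) :=
        List.mem_map_of_mem hg
      exact le_trans (h1 ▸ List.single_le_sum (fun _ _ => Nat.zero_le _) _ h2) (hxb m)
    have hgT : ∀ g ∈ l, ∀ m, (⇑φ)^[m] g ∈ T := by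
      intro g hg m
      exact Set.mem_biUnion (⟨hlG g hg, ⟨c₀, hgb g hg⟩⟩ : g ∈ G ∩ Bdd) ⟨m, rfl⟩
    obtain ⟨N, hN⟩ := list_uniform (⇑φ) (fun y => ∃ p, 1 ≤ p ∧ (⇑φ)^[p] y = y) l
      (fun g hg => ev_per (⇑φ) g hTfin (hgT g hg))
    set m := n * (N + 1) with hm
    have hmN : N ≤ m := by
      have h' : 1 * (N+1) ≤ n * (N+1) := Nat.mul_le_mul_right _ hn
      omega
    have hmx : (⇑φ)^[m] x = x := by
      rw [hm, Function.iterate_mul]; exact Function.iterate_fixed hnx _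
    have hx' : x = (l.map ((⇑φ)^[m])).prod := by rw [← iter_prod, hlp, hmx]
    rw [hx']
    apply Submonoid.list_prod_mem
    intro y hy
    obtain ⟨g, hg, rfl⟩ := List.mem_map.1 hy
    exact Submonoid.subset_closure ⟨hN m hmN g hg, hC _ (hgT g hg m)⟩
  have hPsub : ∀ x ∈ Submonoid.closure F, x ∈ P := by
    intro x hx
    induction hx using Submonoid.closure_induction with
    | mem z hz => exact hz.1
    | one => exact ⟨1, le_refl 1, by simp⟩
    | mul a b ha hb iha ihb =>
      obtain ⟨na, hna, hfa⟩ := iha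
      obtain ⟨nb, hnb, hfb⟩ := ihb
      refine ⟨na * nb, Nat.one_le_iff_ne_zero.2 (Nat.mul_ne_zero (by omega) (by omega)), ?_⟩
      rw [iterate_map_mul]
      have h1 : (⇑φ)^[na * nb] a = a := by
        rw [Function.iterate_mul]; exact Function.iterate_fixed hfa nb
      have h2 : (⇑φ)^[na * nb] b = b := by
        rw [Nat.mul_comm, Function.iterate_mul]; exact Function.iterate_fixed hfb na
      rw [h1, h2]
  have hset : (Submonoid.closure F : Set M) = P := Set.Subset.antisymm hPsub key
  constructor
  · exact ⟨hFfin.toFinset, by rw [hFfin.coe_toFinset, hset]⟩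
  · obtain ⟨R, hR1, hR⟩ := common_R (⇑φ) hFfin (fun z hz => hz.1)
    refine ⟨R, hR1, fun x hx => ?_⟩
    have hxP : x ∈ P := hx
    clear hx
    have hx' : x ∈ Submonoid.closure F := by
      rw [← SetLike.mem_coe, hset]; exact hxP
    clear hxP
    induction hx' using Submonoid.closure_induction with
    | mem z hz => exact hR z hz
    | one => simp
    | mul a b _ _ iha ihb => rw [iterate_map_mul, iha, ihb]

end Aux

/-- The monoid defined by the presentation `⟨A | a₁a₂ = a₃a₄⟩`: the quotient of
the free monoid on `A` by the monoid congruence generated by the single pair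
`(a₁a₂, a₃a₄)`. -/
abbrev presMonoid {A : Type*} (a₁ a₂ a₃ a₄ : A) :=
  (conGen (fun u v : FreeMonoid A =>
    u = FreeMonoid.of a₁ * FreeMonoid.of a₂ ∧
    v = FreeMonoid.of a₃ * FreeMonoid.of a₄)).Quotient

private lemma prod_const_ofAdd {A : Type*} (l : List A) :
    (l.map (fun _ : A => Multiplicative.ofAdd 1)).prod = Multiplicative.ofAdd (l.length) := by
  induction l with
  | nil => rfl
  | cons a l ih =>
    rw [List.map_cons, List.prod_cons, ih, ← ofAdd_add]
    simp [Nat.add_comm]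

theorem stmt_16 (A : Type*) [Fintype A] (a₁ a₂ a₃ a₄ : A)
    (φ : presMonoid a₁ a₂ a₃ a₄ →* presMonoid a₁ a₂ a₃ a₄) :
    (∃ B : Finset (presMonoid a₁ a₂ a₃ a₄),
      (Submonoid.closure (B : Set (presMonoid a₁ a₂ a₃ a₄)) : Set (presMonoid a₁ a₂ a₃ a₄)) =
        {x : presMonoid a₁ a₂ a₃ a₄ | ∃ n : ℕ, 1 ≤ n ∧ (⇑φ)^[n] x = x}) ∧
    (∃ R : ℕ, 1 ≤ R ∧ ∀ x : presMonoid a₁ a₂ a₃ a₄,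
      (∃ n : ℕ, 1 ≤ n ∧ (⇑φ)^[n] x = x) → (⇑φ)^[R] x = x) := by
  classical
  set c : Con (FreeMonoid A) := conGen (fun u v : FreeMonoid A =>
    u = FreeMonoid.of a₁ * FreeMonoid.of a₂ ∧
    v = FreeMonoid.of a₃ * FreeMonoid.of a₄) with hc
  set f : FreeMonoid A →* Multiplicative ℕ :=
    FreeMonoid.lift (fun _ : A => Multiplicative.ofAdd 1) with hfdef
  have hf : ∀ w : FreeMonoid A, f w = Multiplicative.ofAdd (w.length) := by
    intro w
    rw [hfdef, FreeMonoid.lift_apply, prod_const_ofAdd]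
    rfl
  have hker : c ≤ Con.ker f := by
    rw [hc]
    refine Con.conGen_le.2 ?_
    rintro u v ⟨rfl, rfl⟩
    show f _ = f _
    simp [map_mul, FreeMonoid.lift_eval_of, hfdef]
  set L : presMonoid a₁ a₂ a₃ a₄ →* Multiplicative ℕ := c.lift f hker with hL
  set len : presMonoid a₁ a₂ a₃ a₄ → ℕ := fun x => Multiplicative.toAdd (L x) with hlendef
  have hlen : ∀ x y, len (x * y) = len x + len y := by
    intro x y; simp [hlendef, map_mul]
  have hlenmk : ∀ w : FreeMonoid A, len (c.mk' w) = w.length := by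
    intro w
    simp [hlendef, hL, Con.lift_mk', hf]
  have hfin : ∀ C : ℕ, {x : presMonoid a₁ a₂ a₃ a₄ | len x ≤ C}.Finite := by
    intro C
    have h1 : {w : FreeMonoid A | w.length ≤ C}.Finite := by
      refine ((List.finite_length_le A C).image FreeMonoid.ofList).subset ?_
      intro w hw
      exact ⟨FreeMonoid.toList w, hw, FreeMonoid.ofList_toList w⟩
    refine (h1.image c.mk').subset ?_
    intro x hx
    obtain ⟨w, rfl⟩ := Con.mk'_surjective (c := c) x
    exact ⟨w, by show FreeMonoid.length w ≤ C; rw [← hlenmk w]; exact hx, rfl⟩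
  have hdecomp : ∀ w : FreeMonoid A,
      c.mk' w = ((FreeMonoid.toList w).map (fun a => c.mk' (FreeMonoid.of a))).prod := by
    intro w
    have h : (c.mk' : FreeMonoid A →* _) =
        FreeMonoid.lift (fun a => c.mk' (FreeMonoid.of a)) :=
      FreeMonoid.hom_eq (fun a => by simp [FreeMonoid.lift_eval_of])
    conv_lhs => rw [h]
    rw [FreeMonoid.lift_apply]
  have hG : ∀ x : presMonoid a₁ a₂ a₃ a₄, ∃ l : List (presMonoid a₁ a₂ a₃ a₄),
      (∀ g ∈ l, g ∈ Set.range (fun a : A => c.mk' (FreeMonoid.of a))) ∧ l.prod = x := by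
    intro x
    obtain ⟨w, rfl⟩ := Con.mk'_surjective (c := c) x
    refine ⟨(FreeMonoid.toList w).map (fun a => c.mk' (FreeMonoid.of a)), ?_, (hdecomp w).symm⟩
    intro g hg
    obtain ⟨a, _, rfl⟩ := List.mem_map.1 hg
    exact ⟨a, rfl⟩
  exact main_lemma φ len hlen hfin _ (Set.finite_range _) hG
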